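/- Let (X,G) be a complete G-metric space and let T : X → X satisfy G(Tx,Ty,Tz) ≤ α·G(x,y,z) + β·max{G(x,Tx,Tx), G(y,Ty,Ty), G(z,Tz,Tz)} for all x,y,z ∈ X, where α,β are nonnegative real numbers with α + β < 1. Then T has a unique fixed point u ∈ X (Tu = u), and T is G-continuous at u. -/

import Mathlib

open Filter Topology

/-- A G-metric on a set `X` (Mustafa–Sims). The symmetry axiom (G5) is recorded via
the two generating permutations (swap of last two arguments and a cyclic shift),
from which all six equalities of (G5) follow. -/
structure GMetricStruct (X : Type*) where
  G : X → X → X → ℝ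
  nonneg : ∀ x y z, 0 ≤ G x y z
  eq_zero_of_eq : ∀ x y z, x = y → y = z → G x y z = 0
  pos_of_ne : ∀ x y, x ≠ y → 0 < G x x y
  le_of_ne : ∀ x y z, z ≠ y → G x x y ≤ G x y z
  symm_swap : ∀ x y z, G x y z = G x z y
  symm_cycle : ∀ x y z, G x y z = G y z x
  rect : ∀ x y z a, G x y z ≤ G x a a + G a y z

/-- A convex structure `W` on a G-metric space `(X, G)`:
for all `x, y, u, v` and `λ, β ∈ [0,1]` with `λ + β = 1`,
`G(W(x,y;λ,β), u, v) ≤ λ·G(x,u,v) + β·G(y,u,v)`. -/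
def IsConvexStructure {X : Type*} (GM : GMetricStruct X) (W : X → X → ℝ → ℝ → X) : Prop :=
  ∀ x y u v : X, ∀ lam beta : ℝ, lam ∈ Set.Icc (0:ℝ) 1 → beta ∈ Set.Icc (0:ℝ) 1 →
    lam + beta = 1 →
    GM.G (W x y lam beta) u v ≤ lam * GM.G x u v + beta * GM.G y u v

/-- A sequence `x` G-converges to `l` iff `G(x_n, x_n, l) → 0`. -/
def GConvergesTo {X : Type*} (GM : GMetricStruct X) (x : ℕ → X) (l : X) : Prop :=
  Tendsto (fun n => GM.G (x n) (x n) l) atTop (𝓝 0)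

/-- A sequence `x` is G-Cauchy iff `G(x_n, x_m, x_l) → 0` as `n, m, l → ∞`. -/
def GCauchySeq {X : Type*} (GM : GMetricStruct X) (x : ℕ → X) : Prop :=
  ∀ ε : ℝ, 0 < ε → ∃ N : ℕ, ∀ n ≥ N, ∀ m ≥ N, ∀ l ≥ N, GM.G (x n) (x m) (x l) < ε

/-- A G-metric space is complete iff every G-Cauchy sequence G-converges. -/
def GComplete {X : Type*} (GM : GMetricStruct X) : Prop :=
  ∀ x : ℕ → X, GCauchySeq GM x → ∃ l : X, GConvergesTo GM x l

/-- `T` is G-continuous at `u` iff it maps sequences G-converging to `u`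
to sequences G-converging to `T u`. -/
def GContinuousAt {X : Type*} (GM : GMetricStruct X) (T : X → X) (u : X) : Prop :=
  ∀ y : ℕ → X, GConvergesTo GM y u → GConvergesTo GM (fun n => T (y n)) (T u)

lemma GMetricStruct.doub {X : Type*} (GM : GMetricStruct X) (x y : X) :
    GM.G x x y ≤ 2 * GM.G x y y := by
  have h1 := GM.rect x x y y
  have h2 := GM.symm_cycle y x y
  linarith

theorem fixed_point_max_form {X : Type*} [Nonempty X] (GM : GMetricStruct X)
    (hcomp : GComplete GM) (T : X → X)
    (a β : ℝ) (ha : 0 ≤ a) (hβ : 0 ≤ β) (hab : a + β < 1)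
    (hT : ∀ x y z : X, GM.G (T x) (T y) (T z) ≤
      a * GM.G x y z + β * max (GM.G x (T x) (T x))
        (max (GM.G y (T y) (T y)) (GM.G z (T z) (T z)))) :
    ∃ u : X, T u = u ∧ (∀ v : X, T v = v → v = u) ∧ GContinuousAt GM T u := by
  obtain ⟨x0⟩ := ‹Nonempty X›
  set x : ℕ → X := fun n => T^[n] x0 with hxdef
  have hx : ∀ n, x (n + 1) = T (x n) := fun n => Function.iterate_succ_apply' T n x0
  set d : ℕ → ℝ := fun n => GM.G (x n) (x (n + 1)) (x (n + 1)) with hddef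
  set r : ℝ := a + β with hrdef
  have hr0 : 0 ≤ r := by positivity
  have hr1 : r < 1 := hab
  have hdnn : ∀ n, 0 ≤ d n := fun n => GM.nonneg _ _ _
  -- contraction step
  have hstep : ∀ n, d (n + 1) ≤ r * d n := by
    intro n
    have h := hT (x n) (x (n + 1)) (x (n + 1))
    rw [← hx n, ← hx (n + 1)] at h
    simp only [max_self] at h
    have h' : d (n + 1) ≤ a * d n + β * max (d n) (d (n + 1)) := h
    rcases le_total (d (n + 1)) (d n) with hc | hc
    · rw [max_eq_left hc] at h'
      nlinarith [hdnn n]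
    · rw [max_eq_right hc] at h'
      have hβ1 : (0:ℝ) < 1 - β := by linarith
      have h2 : (1 - β) * d (n + 1) ≤ a * d n := by linarith
      have h3 : a * d n ≤ (1 - β) * (r * d n) := by
        have hq : 0 ≤ β * (1 - a - β) * d n :=
          mul_nonneg (mul_nonneg hβ (by linarith)) (hdnn n)
        rw [hrdef]; nlinarith
      have h4 : (1 - β) * d (n + 1) ≤ (1 - β) * (r * d n) := le_trans h2 h3
      exact le_of_mul_le_mul_left h4 hβ1
  have hgeo : ∀ n, d n ≤ r ^ n * d 0 := by
    intro n
    induction n with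
    | zero => simp
    | succ k ih =>
      calc d (k + 1) ≤ r * d k := hstep k
        _ ≤ r * (r ^ k * d 0) := by nlinarith [hdnn k]
        _ = r ^ (k + 1) * d 0 := by ring
  set K : ℝ := d 0 / (1 - r) with hKdef
  have h1r : (0:ℝ) < 1 - r := by linarith
  have hKnn : 0 ≤ K := div_nonneg (hdnn 0) (le_of_lt h1r)
  have hKeq : d 0 + r * K ≤ K := by
    have : d 0 + r * K = K := by
      rw [hKdef]
      field_simp [h1r.ne']
      ring
    linarith
  -- main geometric bound
  have hmain : ∀ k n m, n ≤ m → m ≤ n + k → GM.G (x n) (x m) (x m) ≤ r ^ n * K := by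
    intro k
    induction k with
    | zero =>
      intro n m h1 h2
      have : n = m := le_antisymm h1 (by omega)
      subst this
      have hz := GM.eq_zero_of_eq (x n) (x n) (x n) rfl rfl
      rw [hz]
      positivity
    | succ k ih =>
      intro n m h1 h2
      rcases eq_or_lt_of_le h1 with heq | hlt
      · subst heq
        have hz := GM.eq_zero_of_eq (x n) (x n) (x n) rfl rfl
        rw [hz]
        positivity
      · have h3 : n + 1 ≤ m := hlt
        have h4 : m ≤ (n + 1) + k := by omega
        have hrec := GM.rect (x n) (x m) (x m) (x (n + 1))
        have hih := ih (n + 1) m h3 h4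
        have hdn : GM.G (x n) (x (n + 1)) (x (n + 1)) ≤ r ^ n * d 0 := hgeo n
        have hfin : r ^ n * d 0 + r ^ (n + 1) * K ≤ r ^ n * K := by
          have hp : (0:ℝ) ≤ r ^ n := pow_nonneg hr0 n
          have := mul_le_mul_of_nonneg_left hKeq hp
          rw [pow_succ]
          nlinarith
        calc GM.G (x n) (x m) (x m)
            ≤ GM.G (x n) (x (n + 1)) (x (n + 1)) + GM.G (x (n + 1)) (x m) (x m) := hrec
          _ ≤ r ^ n * d 0 + r ^ (n + 1) * K := by linarith
          _ ≤ r ^ n * K := hfin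
  have hbound : ∀ n m, n ≤ m → GM.G (x n) (x m) (x m) ≤ r ^ n * K := by
    intro n m h
    exact hmain (m - n) n m h (by omega)
  have hbound2 : ∀ n m, n ≤ m → GM.G (x m) (x n) (x n) ≤ 2 * (r ^ n * K) := by
    intro n m h
    have h1 : GM.G (x m) (x n) (x n) = GM.G (x n) (x n) (x m) := by
      rw [GM.symm_cycle]
    rw [h1]
    calc GM.G (x n) (x n) (x m) ≤ 2 * GM.G (x n) (x m) (x m) := GM.doub _ _
      _ ≤ 2 * (r ^ n * K) := by linarith [hbound n m h]
  -- Cauchy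
  have hten : Tendsto (fun n : ℕ => r ^ n * K) atTop (𝓝 0) := by
    have := (tendsto_pow_atTop_nhds_zero_of_lt_one hr0 hr1).mul_const K
    simpa using this
  have hcauchy : GCauchySeq GM x := by
    intro ε hε
    have h6 : (0:ℝ) < ε / 6 := by linarith
    obtain ⟨N, hN⟩ := (Metric.tendsto_atTop.mp hten) (ε / 6) h6
    refine ⟨N, fun n hn m hm l hl => ?_⟩
    have hNb : r ^ N * K < ε / 6 := by
      have := hN N le_rfl
      rw [Real.dist_eq, sub_zero, abs_of_nonneg (by positivity)] at this
      exact this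
    have t1 : GM.G (x n) (x N) (x N) ≤ 2 * (r ^ N * K) := hbound2 N n hn
    have t2 : GM.G (x m) (x N) (x N) ≤ 2 * (r ^ N * K) := hbound2 N m hm
    have t3 : GM.G (x N) (x l) (x N) ≤ 2 * (r ^ N * K) := by
      have h1 : GM.G (x N) (x l) (x N) = GM.G (x N) (x N) (x l) := GM.symm_swap _ _ _
      rw [h1]
      calc GM.G (x N) (x N) (x l) ≤ 2 * GM.G (x N) (x l) (x l) := GM.doub _ _
        _ ≤ 2 * (r ^ N * K) := by linarith [hbound N l hl]
    have r1 := GM.rect (x n) (x m) (x l) (x N)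
    have r2 : GM.G (x N) (x m) (x l) ≤ GM.G (x m) (x N) (x N) + GM.G (x N) (x l) (x N) := by
      have hc : GM.G (x N) (x m) (x l) = GM.G (x m) (x l) (x N) := GM.symm_cycle _ _ _
      rw [hc]
      exact GM.rect (x m) (x l) (x N) (x N)
    linarith
  obtain ⟨u, hu⟩ := hcomp x hcauchy
  have hu' : Tendsto (fun n => GM.G (x n) (x n) u) atTop (𝓝 0) := hu
  set g : ℕ → ℝ := fun n => GM.G (x n) (x n) u with hgdef
  -- d n → 0
  have hd0 : Tendsto d atTop (𝓝 0) := by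
    apply squeeze_zero hdnn hgeo
    have := (tendsto_pow_atTop_nhds_zero_of_lt_one hr0 hr1).mul_const (d 0)
    simpa using this
  -- the fixed point
  set c : ℝ := GM.G u (T u) (T u) with hcdef
  have hcnn : 0 ≤ c := GM.nonneg _ _ _
  have hkey : ∀ n, c ≤ g (n + 1) + 2 * a * g n + β * (d n + c) := by
    intro n
    have h1 : c ≤ GM.G u (x (n + 1)) (x (n + 1)) + GM.G (x (n + 1)) (T u) (T u) :=
      GM.rect u (T u) (T u) (x (n + 1))
    have h2 : GM.G (x (n + 1)) (T u) (T u) ≤ a * GM.G (x n) u u + β * max (d n) c := by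
      have h := hT (x n) u u
      rw [← hx n] at h
      simpa [← hcdef, ← hddef] using h
    have h3 : GM.G u (x (n + 1)) (x (n + 1)) = g (n + 1) := GM.symm_cycle _ _ _
    have h4 : GM.G (x n) u u ≤ 2 * g n := by
      have e1 : GM.G (x n) u u = GM.G u u (x n) := GM.symm_cycle _ _ _
      have e2 : GM.G u (x n) (x n) = g n := GM.symm_cycle _ _ _
      rw [e1]
      calc GM.G u u (x n) ≤ 2 * GM.G u (x n) (x n) := GM.doub _ _
        _ = 2 * g n := by rw [e2]
    have h5 : max (d n) c ≤ d n + c := max_le (by linarith [hcnn]) (by linarith [hdnn n])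
    nlinarith [GM.nonneg (x n) u u]
  have hlim : Tendsto (fun n => g (n + 1) + 2 * a * g n + β * (d n + c)) atTop
      (𝓝 (0 + 2 * a * 0 + β * (0 + c))) :=
    (((hu'.comp (tendsto_add_atTop_nat 1)).add (tendsto_const_nhds.mul hu')).add
      (tendsto_const_nhds.mul (hd0.add tendsto_const_nhds)))
  have hcle : c ≤ 0 + 2 * a * 0 + β * (0 + c) :=
    ge_of_tendsto hlim (Eventually.of_forall hkey)
  have hc0 : c = 0 := by nlinarith
  have hfix : T u = u := by
    by_contra hne
    have hpos : 0 < GM.G u u (T u) := GM.pos_of_ne u (T u) (fun h => hne h.symm)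
    have : GM.G u u (T u) ≤ 2 * c := GM.doub u (T u)
    linarith
  refine ⟨u, hfix, ?_, ?_⟩
  · -- uniqueness
    intro v hv
    have h := hT v u u
    rw [hv, hfix] at h
    have hz1 : GM.G v v v = 0 := GM.eq_zero_of_eq _ _ _ rfl rfl
    have hz2 : GM.G u u u = 0 := GM.eq_zero_of_eq _ _ _ rfl rfl
    rw [hz1, hz2] at h
    simp only [max_self, max_eq_right (le_refl (0:ℝ))] at h
    have hvu : GM.G v u u = 0 := by
      have hnn := GM.nonneg v u u
      nlinarith [h]
    by_contra hne
    have hpos : 0 < GM.G v v u := GM.pos_of_ne v u hne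
    have : GM.G v v u ≤ 2 * GM.G v u u := GM.doub v u
    linarith
  · -- continuity at u
    intro y hy
    have hy' : Tendsto (fun n => GM.G (y n) (y n) u) atTop (𝓝 0) := hy
    set f : ℕ → ℝ := fun n => GM.G (T (y n)) (T (y n)) u with hfdef
    set gy : ℕ → ℝ := fun n => GM.G (y n) (y n) u with hgydef
    have hfb : ∀ n, f n ≤ (a + 2 * β) / (1 - β) * gy n := by
      intro n
      have hβ1 : (0:ℝ) < 1 - β := by linarith
      have h := hT (y n) (y n) u
      rw [hfix] at h
      have hz : GM.G u u u = 0 := GM.eq_zero_of_eq _ _ _ rfl rfl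
      rw [hz] at h
      set e : ℝ := GM.G (y n) (T (y n)) (T (y n)) with hedef
      have henn : 0 ≤ e := GM.nonneg _ _ _
      have hmax : max e (max e 0) ≤ e := max_le le_rfl (max_le le_rfl henn)
      have h' : f n ≤ a * gy n + β * e := by
        have hb : β * max e (max e 0) ≤ β * e := mul_le_mul_of_nonneg_left hmax hβ
        calc f n ≤ a * GM.G (y n) (y n) u + β * max e (max e 0) := h
          _ ≤ a * gy n + β * e := by simp only [hgydef]; linarith
      have he : e ≤ 2 * gy n + f n := by
        have hrect : e ≤ GM.G (y n) u u + GM.G u (T (y n)) (T (y n)) :=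
          GM.rect (y n) (T (y n)) (T (y n)) u
        have h4 : GM.G (y n) u u ≤ 2 * gy n := by
          have e1 : GM.G (y n) u u = GM.G u u (y n) := GM.symm_cycle _ _ _
          have e2 : GM.G u (y n) (y n) = gy n := GM.symm_cycle _ _ _
          rw [e1]
          calc GM.G u u (y n) ≤ 2 * GM.G u (y n) (y n) := GM.doub _ _
            _ = 2 * gy n := by rw [e2]
        have h5 : GM.G u (T (y n)) (T (y n)) = f n := GM.symm_cycle _ _ _
        linarith
      have hfnn : 0 ≤ f n := GM.nonneg _ _ _
      have hgynn : 0 ≤ gy n := GM.nonneg _ _ _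
      rw [div_mul_eq_mul_div, le_div_iff₀ hβ1]
      nlinarith
    have hfnn : ∀ n, 0 ≤ f n := fun n => GM.nonneg _ _ _
    have hlim2 : Tendsto (fun n => (a + 2 * β) / (1 - β) * gy n) atTop (𝓝 0) := by
      have := hy'.const_mul ((a + 2 * β) / (1 - β))
      simpa using this
    have hft : Tendsto f atTop (𝓝 0) := squeeze_zero hfnn hfb hlim2
    show Tendsto (fun n => GM.G (T (y n)) (T (y n)) (T u)) atTop (𝓝 0)
    rw [hfix]
    exact hft
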